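/- For every integer N ≥ 1, h = 1/N and every z ∈ [0,1], the minimum of the quadratic form Q_1(C) = −( Σ_{β=0}^N Σ_{γ=0}^N C_β C_γ G_1(hβ − hγ) − 2 Σ_{β=0}^N C_β G_1(z − hβ) ) over all C ∈ ℝ^{N+1} with Σ_{β=0}^N C_β e^{−hβ} = e^{−z} is attained at C = C̊(z) and equals (1/4) Σ_{β=0}^N C̊_β(z) · sgn(z − hβ) · (e^{z−hβ} − e^{hβ−z}). (This value is the squared norm of the error functional of the optimal interpolation formula on W_2^{(1,0)}(0,1).) -/

import Mathlib

/-- `G₁(x) = sgn(x)·(eˣ − e⁻ˣ)/4`, with `sgn 0 = 0`. -/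
noncomputable def G1 (x : ℝ) : ℝ := Real.sign x * (Real.exp x - Real.exp (-x)) / 4

/-- The optimal coefficients `C̊_β(z)` of the optimal interpolation formula in
`W₂^{(1,0)}(0,1)` with equally spaced nodes `x_β = βh`, `h = 1/N`. -/
noncomputable def optC1 (N : ℕ) (z : ℝ) (β : ℕ) : ℝ :=
  let h : ℝ := 1 / N;
  1 / (2 * (1 - Real.exp (2 * h))) *
    (Real.sign (z - h * β - h) * (Real.exp (h * β + 2 * h - z) - Real.exp (z - h * β))
      + Real.sign (z - h * β + h) * (Real.exp (h * β - z) - Real.exp (z - h * β + 2 * h))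
      + (1 + Real.exp (2 * h)) * Real.sign (z - h * β) *
          (Real.exp (z - h * β) - Real.exp (h * β - z)))

/-- The quadratic form `Q₁(C) = −(Σ_β Σ_γ C_β C_γ G₁(hβ−hγ) − 2 Σ_β C_β G₁(z−hβ))`,
the squared norm of the error functional in `W₂^{(1,0)*}(0,1)`. -/
noncomputable def Q1 (N : ℕ) (z : ℝ) (C : ℕ → ℝ) : ℝ :=
  let h : ℝ := 1 / N;
  -((∑ β ∈ Finset.range (N + 1), (∑ γ ∈ Finset.range (N + 1),
        C β * C γ * G1 (h * β - h * γ)))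
    - 2 * ∑ β ∈ Finset.range (N + 1), C β * G1 (z - h * β))

lemma G1_of_nonneg {x : ℝ} (hx : 0 ≤ x) : G1 x = (Real.exp x - Real.exp (-x)) / 4 := by
  rcases eq_or_lt_of_le hx with h | h
  · simp [G1, ← h]
  · simp [G1, Real.sign_of_pos h]

lemma G1_of_nonpos {x : ℝ} (hx : x ≤ 0) : G1 x = (Real.exp (-x) - Real.exp x) / 4 := by
  rcases eq_or_lt_of_le hx with h | h
  · simp [G1, h]
  · rw [G1, Real.sign_of_neg h]; ring

lemma G1_even (x : ℝ) : G1 (-x) = G1 x := by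
  rcases le_total x 0 with h | h
  · rw [G1_of_nonpos h, G1_of_nonneg (by linarith : (0:ℝ) ≤ -x), neg_neg]
  · rw [G1_of_nonneg h, G1_of_nonpos (by linarith : -x ≤ 0), neg_neg]

lemma G1_grid (h : ℝ) (hp : 0 < h) (β γ : ℕ) :
    G1 (h * β - h * γ) = (Real.exp (h * β - h * γ) + Real.exp (h * γ - h * β)) / 4
      - Real.exp (-h) ^ (max β γ - min β γ) / 2 := by
  rcases le_total γ β with hle | hle
  · have hc : (γ:ℝ) ≤ (β:ℝ) := by exact_mod_cast hle
    have he : Real.exp (-h) ^ (β - γ) = Real.exp (h * γ - h * β) := by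
      rw [← Real.exp_nat_mul]; congr 1
      rw [Nat.cast_sub hle]; ring
    rw [G1_of_nonneg (by nlinarith : (0:ℝ) ≤ h * β - h * γ), max_eq_left hle,
      min_eq_right hle, he, show -(h * (β:ℝ) - h * γ) = h * γ - h * β by ring]
    ring
  · have hc : (β:ℝ) ≤ (γ:ℝ) := by exact_mod_cast hle
    have he : Real.exp (-h) ^ (γ - β) = Real.exp (h * β - h * γ) := by
      rw [← Real.exp_nat_mul]; congr 1
      rw [Nat.cast_sub hle]; ring
    rw [G1_of_nonpos (by nlinarith : h * (β:ℝ) - h * γ ≤ 0), max_eq_right hle,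
      min_eq_left hle, he, show -(h * (β:ℝ) - h * γ) = h * γ - h * β by ring]
    ring

lemma kms_identity (r : ℝ) (d : ℕ → ℝ) (n : ℕ) :
    ∑ β ∈ Finset.range (n+1), ∑ γ ∈ Finset.range (n+1),
      d β * d γ * r ^ (max β γ - min β γ)
    = (1 - r^2) * ∑ i ∈ Finset.range n,
        (∑ j ∈ Finset.range (i+1), d j * r ^ (i - j))^2
      + (∑ j ∈ Finset.range (n+1), d j * r ^ (n - j))^2 := by
  induction n with
  | zero => simp; ring
  | succ n ih =>
    have hu1 : ∑ j ∈ Finset.range (n+1+1), d j * r ^ (n+1 - j)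
        = r * (∑ j ∈ Finset.range (n+1), d j * r ^ (n - j)) + d (n+1) := by
      rw [Finset.sum_range_succ, Finset.mul_sum]
      congr 1
      · refine Finset.sum_congr rfl fun j hj => ?_
        rw [Finset.mem_range] at hj
        rw [show n + 1 - j = (n - j) + 1 by omega, pow_succ]
        ring
      · simp
    have h1 : ∀ β ∈ Finset.range (n+1),
        ∑ γ ∈ Finset.range (n+1+1), d β * d γ * r ^ (max β γ - min β γ)
        = (∑ γ ∈ Finset.range (n+1), d β * d γ * r ^ (max β γ - min β γ))
          + d β * d (n+1) * r ^ (n+1-β) := by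
      intro β hβ; rw [Finset.mem_range] at hβ
      rw [Finset.sum_range_succ, max_eq_right (by omega : β ≤ n+1),
        min_eq_left (by omega : β ≤ n+1)]
    have h2 : ∑ β ∈ Finset.range (n+1), d β * d (n+1) * r ^ (n+1-β)
        = d (n+1) * r * ∑ j ∈ Finset.range (n+1), d j * r ^ (n-j) := by
      rw [Finset.mul_sum]
      refine Finset.sum_congr rfl fun β hβ => ?_
      rw [Finset.mem_range] at hβ
      rw [show n + 1 - β = (n - β) + 1 by omega, pow_succ]
      ring
    have h3 : ∑ γ ∈ Finset.range (n+1+1), d (n+1) * d γ * r ^ (max (n+1) γ - min (n+1) γ)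
        = d (n+1) * r * (∑ j ∈ Finset.range (n+1), d j * r ^ (n-j)) + d (n+1) * d (n+1) := by
      rw [Finset.sum_range_succ]
      congr 1
      · rw [Finset.mul_sum]
        refine Finset.sum_congr rfl fun γ hγ => ?_
        rw [Finset.mem_range] at hγ
        rw [max_eq_left (by omega : γ ≤ n+1), min_eq_right (by omega : γ ≤ n+1),
          show n + 1 - γ = (n - γ) + 1 by omega, pow_succ]
        ring
      · simp
    rw [Finset.sum_range_succ, Finset.sum_congr rfl h1, Finset.sum_add_distrib, h2, h3,
      Finset.sum_range_succ (fun i => (∑ j ∈ Finset.range (i+1), d j * r ^ (i - j))^2), hu1]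
    linear_combination ih

lemma kms_psd (r : ℝ) (h0 : 0 ≤ r) (h1 : r ≤ 1) (d : ℕ → ℝ) (n : ℕ) :
    0 ≤ ∑ β ∈ Finset.range (n+1), ∑ γ ∈ Finset.range (n+1),
      d β * d γ * r ^ (max β γ - min β γ) := by
  rw [kms_identity]
  have hr : 0 ≤ 1 - r^2 := by nlinarith
  have hs := Finset.sum_nonneg (fun i (_ : i ∈ Finset.range n) =>
    sq_nonneg (∑ j ∈ Finset.range (i+1), d j * r ^ (i - j)))
  nlinarith [sq_nonneg (∑ j ∈ Finset.range (n+1), d j * r ^ (n - j))]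

noncomputable def cAx (h u : ℝ) : ℝ :=
  (Real.exp u - Real.exp (2*h - u)) / (1 - Real.exp (2*h))

noncomputable def cBx (h u : ℝ) : ℝ :=
  (Real.exp (h - u) - Real.exp (h + u)) / (1 - Real.exp (2*h))

lemma coeff_eval (h z : ℝ) (hp : 0 < h) (α γ : ℕ)
    (hu0 : h * α ≤ z) (huh : z ≤ h * α + h) :
    1 / (2 * (1 - Real.exp (2 * h))) *
    (Real.sign (z - h * γ - h) * (Real.exp (h * γ + 2 * h - z) - Real.exp (z - h * γ))
      + Real.sign (z - h * γ + h) * (Real.exp (h * γ - z) - Real.exp (z - h * γ + 2 * h))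
      + (1 + Real.exp (2 * h)) * Real.sign (z - h * γ) *
          (Real.exp (z - h * γ) - Real.exp (h * γ - z)))
    = if γ = α then cAx h (z - h * α) else if γ = α + 1 then cBx h (z - h * α) else 0 := by
  have hEh := Real.exp_pos h
  have hgt : 1 < Real.exp h := by
    rw [← Real.exp_zero]; exact Real.exp_lt_exp.2 hp
  have hden : 1 - Real.exp h * Real.exp h ≠ 0 := by nlinarith
  by_cases hγα : γ = α
  · subst hγα
    rw [if_pos rfl]
    have p2 : 0 < z - h * ↑γ + h := by linarith
    rcases eq_or_lt_of_le (by linarith : (0:ℝ) ≤ z - h * ↑γ) with heq | hpos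
    · rw [← heq, Real.sign_zero, Real.sign_of_neg (by linarith : (0:ℝ) - h < 0),
        Real.sign_of_pos (by linarith : (0:ℝ) + h > 0)]
      simp only [cAx]
      rw [show (2:ℝ)*h = h + h by ring]
      simp only [Real.exp_add, Real.exp_sub, Real.exp_neg, Real.exp_zero]
      have hez : Real.exp z = Real.exp (h * ↑γ) := by congr 1; linarith
      rw [hez]
      field_simp
      ring
    · rw [Real.sign_of_pos hpos, Real.sign_of_pos p2]
      rcases eq_or_lt_of_le (by linarith : z - h * ↑γ ≤ h) with heq | hlt
      · rw [show z - h * ↑γ - h = 0 by linarith, Real.sign_zero]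
        simp only [cAx]
        rw [show (2:ℝ)*h = h + h by ring]
        simp only [Real.exp_add, Real.exp_sub, Real.exp_neg]
        have hez : Real.exp z = Real.exp (h * ↑γ) * Real.exp h := by
          rw [← Real.exp_add]; congr 1; linarith
        rw [hez]
        field_simp
        ring
      · rw [Real.sign_of_neg (by linarith : z - h * ↑γ - h < 0)]
        simp only [cAx]
        rw [show (2:ℝ)*h = h + h by ring]
        simp only [Real.exp_add, Real.exp_sub, Real.exp_neg]
        field_simp
        ring
  · by_cases hγα1 : γ = α + 1
    · subst hγα1
      rw [if_neg hγα, if_pos rfl]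
      rw [show h * ((α:ℕ) + 1 : ℕ) = h * α + h by push_cast; ring]
      have a1 : z - (h * ↑α + h) - h < 0 := by linarith
      rw [Real.sign_of_neg a1]
      rcases eq_or_lt_of_le (by linarith : (0:ℝ) ≤ z - h * ↑α) with heq | hpos
      · rw [show z - (h * ↑α + h) + h = 0 by linarith, Real.sign_zero,
          Real.sign_of_neg (by linarith : z - (h * ↑α + h) < 0)]
        simp only [cBx]
        rw [show (2:ℝ)*h = h + h by ring]
        simp only [Real.exp_add, Real.exp_sub, Real.exp_neg]
        have hez : Real.exp z = Real.exp (h * ↑α) := by congr 1; linarith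
        rw [hez]
        field_simp
        ring
      · rw [Real.sign_of_pos (by linarith : 0 < z - (h * ↑α + h) + h)]
        rcases eq_or_lt_of_le (by linarith : z - h * ↑α ≤ h) with heq | hlt
        · rw [show z - (h * ↑α + h) = 0 by linarith, Real.sign_zero]
          simp only [cBx]
          rw [show (2:ℝ)*h = h + h by ring]
          simp only [Real.exp_add, Real.exp_sub, Real.exp_neg]
          have hez : Real.exp z = Real.exp (h * ↑α) * Real.exp h := by
            rw [← Real.exp_add]; congr 1; linarith
          rw [hez]
          field_simp
          simp only [Real.exp_zero]
          ring
        · rw [Real.sign_of_neg (by linarith : z - (h * ↑α + h) < 0)]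
          simp only [cBx]
          rw [show (2:ℝ)*h = h + h by ring]
          simp only [Real.exp_add, Real.exp_sub, Real.exp_neg]
          field_simp
          ring
    · rw [if_neg hγα, if_neg hγα1]
      rcases Nat.lt_or_ge γ α with hlt | hge
      · -- γ < α
        have hc : (γ:ℝ) + 1 ≤ (α:ℝ) := by exact_mod_cast Nat.succ_le_of_lt hlt
        have hγz : h * ↑γ + h ≤ z := by nlinarith
        have p3 : 0 < z - h * ↑γ := by nlinarith
        have p2 : 0 < z - h * ↑γ + h := by nlinarith
        rw [Real.sign_of_pos p2, Real.sign_of_pos p3]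
        rcases eq_or_lt_of_le (by linarith : (0:ℝ) ≤ z - h * ↑γ - h) with heq | hpos
        · rw [← heq, Real.sign_zero]
          rw [show (2:ℝ)*h = h + h by ring]
          simp only [Real.exp_add, Real.exp_sub, Real.exp_neg]
          have hez : Real.exp z = Real.exp (h * ↑γ) * Real.exp h := by
            rw [← Real.exp_add]; congr 1; linarith
          rw [hez]
          field_simp
          ring
        · rw [Real.sign_of_pos hpos]
          rw [show (2:ℝ)*h = h + h by ring]
          simp only [Real.exp_add, Real.exp_sub, Real.exp_neg]
          field_simp
          ring
      · -- α + 1 < γ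
        have hgt2 : α + 1 < γ := by omega
        have hc : (α:ℝ) + 2 ≤ (γ:ℝ) := by exact_mod_cast Nat.succ_le_of_lt hgt2
        have a3 : z - h * ↑γ < 0 := by nlinarith
        have a1 : z - h * ↑γ - h < 0 := by nlinarith
        rw [Real.sign_of_neg a1, Real.sign_of_neg a3]
        rcases eq_or_lt_of_le (by nlinarith : z - h * ↑γ + h ≤ 0) with heq | hneg
        · rw [heq, Real.sign_zero]
          rw [show (2:ℝ)*h = h + h by ring]
          simp only [Real.exp_add, Real.exp_sub, Real.exp_neg]
          have hez : Real.exp (h * ↑γ) = Real.exp z * Real.exp h := by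
            rw [← Real.exp_add]; congr 1; linarith
          rw [hez]
          field_simp
          ring
        · rw [Real.sign_of_neg hneg]
          rw [show (2:ℝ)*h = h + h by ring]
          simp only [Real.exp_add, Real.exp_sub, Real.exp_neg]
          field_simp
          ring

lemma el_eval (h z : ℝ) (hp : 0 < h) (α β : ℕ)
    (hu0 : h * α ≤ z) (huh : z ≤ h * α + h) :
    cAx h (z - h * α) * G1 (h * β - h * α)
      + cBx h (z - h * α) * G1 (h * β - h * ((α:ℕ) + 1 : ℕ)) = G1 (z - h * β) := by
  have hEh := Real.exp_pos h
  have hgt : 1 < Real.exp h := by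
    rw [← Real.exp_zero]; exact Real.exp_lt_exp.2 hp
  have hden : 1 - Real.exp h * Real.exp h ≠ 0 := by nlinarith
  have hden2 : 1 - Real.exp h ^ 2 ≠ 0 := by rw [sq]; exact hden
  rw [show h * ((α:ℕ) + 1 : ℕ) = h * α + h by push_cast; ring]
  rcases le_or_gt β α with hle | hlt
  · have hc : (β:ℝ) ≤ (α:ℝ) := by exact_mod_cast hle
    rw [G1_of_nonpos (by nlinarith : h * (β:ℝ) - h * α ≤ 0),
      G1_of_nonpos (by nlinarith : h * (β:ℝ) - (h * α + h) ≤ 0),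
      G1_of_nonneg (by nlinarith : (0:ℝ) ≤ z - h * β)]
    simp only [cAx, cBx]
    rw [show (2:ℝ)*h = h + h by ring]
    simp only [Real.exp_add, Real.exp_sub, Real.exp_neg]
    field_simp
    ring
  · have hc : (α:ℝ) + 1 ≤ (β:ℝ) := by exact_mod_cast Nat.succ_le_of_lt hlt
    rw [G1_of_nonneg (by nlinarith : (0:ℝ) ≤ h * (β:ℝ) - h * α),
      G1_of_nonneg (by nlinarith : (0:ℝ) ≤ h * (β:ℝ) - (h * α + h)),
      G1_of_nonpos (by nlinarith : z - h * (β:ℝ) ≤ 0)]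
    simp only [cAx, cBx]
    rw [show (2:ℝ)*h = h + h by ring]
    simp only [Real.exp_add, Real.exp_sub, Real.exp_neg]
    field_simp
    ring

lemma constr_eval (h z : ℝ) (hp : 0 < h) (α : ℕ) :
    cAx h (z - h * α) * Real.exp (-(h * α))
      + cBx h (z - h * α) * Real.exp (-(h * ((α:ℕ) + 1 : ℕ))) = Real.exp (-z) := by
  have hEh := Real.exp_pos h
  have hgt : 1 < Real.exp h := by
    rw [← Real.exp_zero]; exact Real.exp_lt_exp.2 hp
  have hden : 1 - Real.exp h * Real.exp h ≠ 0 := by nlinarith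
  have hden2 : 1 - Real.exp h ^ 2 ≠ 0 := by rw [sq]; exact hden
  rw [show h * ((α:ℕ) + 1 : ℕ) = h * α + h by push_cast; ring]
  simp only [cAx, cBx]
  rw [show (2:ℝ)*h = h + h by ring]
  simp only [Real.exp_add, Real.exp_sub, Real.exp_neg]
  field_simp
  ring

/-- For every `N ≥ 1`, `h = 1/N` and every `z ∈ [0,1]`, the minimum of `Q₁` over all
`C ∈ ℝ^{N+1}` with `Σ_β C_β e^{−hβ} = e^{−z}` is attained at `C = C̊(z)` and equals
`(1/4)·Σ_β C̊_β(z)·sgn(z−hβ)·(e^{z−hβ} − e^{hβ−z})`, the squared norm of the error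
functional of the optimal interpolation formula on `W₂^{(1,0)}(0,1)`. -/
theorem norm_error_functional_m1 (N : ℕ) (hN : 1 ≤ N) (z : ℝ)
    (hz : z ∈ Set.Icc (0 : ℝ) 1) :
    (∑ β ∈ Finset.range (N + 1), optC1 N z β * Real.exp (-((1 / N : ℝ) * β))
        = Real.exp (-z)) ∧
    (∀ C : ℕ → ℝ,
      (∑ β ∈ Finset.range (N + 1), C β * Real.exp (-((1 / N : ℝ) * β)) = Real.exp (-z)) →
        Q1 N z (fun β => optC1 N z β) ≤ Q1 N z C) ∧
    Q1 N z (fun β => optC1 N z β)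
      = 1 / 4 * ∑ β ∈ Finset.range (N + 1), optC1 N z β *
          Real.sign (z - (1 / N : ℝ) * β) *
          (Real.exp (z - (1 / N : ℝ) * β) - Real.exp ((1 / N : ℝ) * β - z)) := by
  obtain ⟨hz0, hz1⟩ := hz
  have hN0 : (0:ℝ) < N := by exact_mod_cast hN
  set h : ℝ := 1 / (N:ℝ) with hh
  have hp : 0 < h := by positivity
  have hNh : h * N = 1 := by rw [hh]; field_simp
  obtain ⟨α, hα1, hzl, hzu⟩ : ∃ α : ℕ, α + 1 ≤ N ∧ h * α ≤ z ∧ z ≤ h * α + h := by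
    rcases le_or_gt (⌊z * N⌋₊ + 1) N with hc | hc
    · refine ⟨⌊z * N⌋₊, hc, ?_, ?_⟩
      · have h1 : (⌊z * N⌋₊ : ℝ) ≤ z * N := Nat.floor_le (by positivity)
        have h2 := mul_le_mul_of_nonneg_left h1 hp.le
        calc h * ↑⌊z * N⌋₊ ≤ h * (z * N) := h2
          _ = z * (h * N) := by ring
          _ = z := by rw [hNh, mul_one]
      · have h1 : z * N < ⌊z * N⌋₊ + 1 := Nat.lt_floor_add_one _
        have h2 := mul_lt_mul_of_pos_left h1 hp
        have h3 : h * (z * N) = z := by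
          calc h * (z * N) = z * (h * N) := by ring
            _ = z := by rw [hNh, mul_one]
        rw [h3] at h2
        nlinarith [h2]
    · have hfl : (N:ℝ) ≤ z * N := by
        have hNf : N ≤ ⌊z * N⌋₊ := by omega
        exact_mod_cast (Nat.le_floor_iff (by positivity)).1 hNf
      have hz1' : (1:ℝ) ≤ z := by nlinarith
      have hzeq : z = 1 := le_antisymm hz1 hz1'
      have hcast : ((N - 1 : ℕ) : ℝ) = (N:ℝ) - 1 := by
        rw [Nat.cast_sub hN]; norm_num
      refine ⟨N - 1, by omega, ?_, ?_⟩
      · rw [hcast, hzeq]; nlinarith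
      · rw [hcast, hzeq]; nlinarith
  have hC : ∀ γ : ℕ, optC1 N z γ
      = if γ = α then cAx h (z - h * α) else if γ = α + 1 then cBx h (z - h * α) else 0 := by
    intro γ
    have huf : optC1 N z γ = 1 / (2 * (1 - Real.exp (2 * h))) *
      (Real.sign (z - h * γ - h) * (Real.exp (h * γ + 2 * h - z) - Real.exp (z - h * γ))
        + Real.sign (z - h * γ + h) * (Real.exp (h * γ - z) - Real.exp (z - h * γ + 2 * h))
        + (1 + Real.exp (2 * h)) * Real.sign (z - h * γ) *
            (Real.exp (z - h * γ) - Real.exp (h * γ - z))) := rfl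
    rw [huf]
    exact coeff_eval h z hp α γ hzl hzu
  have hpairsub : ({α, α + 1} : Finset ℕ) ⊆ Finset.range (N + 1) := by
    intro x hx
    simp only [Finset.mem_insert, Finset.mem_singleton] at hx
    rcases hx with rfl | rfl <;> (rw [Finset.mem_range]; omega)
  have hsum : ∀ f : ℕ → ℝ, ∑ γ ∈ Finset.range (N + 1), optC1 N z γ * f γ
      = cAx h (z - h * α) * f α + cBx h (z - h * α) * f (α + 1) := by
    intro f
    rw [← Finset.sum_subset hpairsub (fun x _ hx => ?_)]
    · rw [Finset.sum_pair (by omega : α ≠ α + 1), hC α, hC (α + 1),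
        if_pos rfl, if_neg (by omega), if_pos rfl]
    · rw [hC x]
      simp only [Finset.mem_insert, Finset.mem_singleton, not_or] at hx
      rw [if_neg hx.1, if_neg hx.2, zero_mul]
  -- Part 1 : the constraint
  have part1 : ∑ β ∈ Finset.range (N + 1), optC1 N z β * Real.exp (-(h * β))
      = Real.exp (-z) := by
    rw [hsum (fun β => Real.exp (-(h * β)))]
    exact constr_eval h z hp α
  -- pointwise Euler–Lagrange identities
  have hrow : ∀ β : ℕ, ∑ γ ∈ Finset.range (N + 1), optC1 N z γ * G1 (h * β - h * γ)
      = G1 (z - h * β) := by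
    intro β
    rw [hsum (fun γ => G1 (h * β - h * γ))]
    exact el_eval h z hp α β hzl hzu
  have hcol : ∀ γ : ℕ, ∑ β ∈ Finset.range (N + 1), optC1 N z β * G1 (h * β - h * γ)
      = G1 (z - h * γ) := by
    intro γ
    rw [← hrow γ]
    refine Finset.sum_congr rfl fun β _ => ?_
    rw [show h * (β:ℝ) - h * γ = -(h * γ - h * β) by ring, G1_even]
  -- Part 3 : the value of Q1 at the optimal coefficients
  have part3 : Q1 N z (fun β => optC1 N z β)
      = ∑ β ∈ Finset.range (N + 1), optC1 N z β * G1 (z - h * β) := by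
    simp only [Q1]
    rw [← hh]
    have hd : ∀ β ∈ Finset.range (N + 1), ∑ γ ∈ Finset.range (N + 1),
        optC1 N z β * optC1 N z γ * G1 (h * β - h * γ)
        = optC1 N z β * G1 (z - h * β) := by
      intro β _
      rw [← hrow β, Finset.mul_sum]
      exact Finset.sum_congr rfl fun γ _ => by ring
    rw [Finset.sum_congr rfl hd]
    ring
  have part3' : Q1 N z (fun β => optC1 N z β)
      = 1 / 4 * ∑ β ∈ Finset.range (N + 1), optC1 N z β *
          Real.sign (z - h * β) * (Real.exp (z - h * β) - Real.exp (h * β - z)) := by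
    rw [part3, Finset.mul_sum]
    refine Finset.sum_congr rfl fun β _ => ?_
    simp only [G1]
    rw [show -(z - h * (β:ℝ)) = h * β - z by ring]
    ring
  -- Part 2 : minimality
  have part2 : ∀ C : ℕ → ℝ,
      (∑ β ∈ Finset.range (N + 1), C β * Real.exp (-(h * β)) = Real.exp (-z)) →
      Q1 N z (fun β => optC1 N z β) ≤ Q1 N z C := by
    intro C hCs
    set D : ℕ → ℝ := fun β => C β - optC1 N z β with hD
    have hD0 : ∑ β ∈ Finset.range (N + 1), D β * Real.exp (-(h * β)) = 0 := by
      have he : ∀ β ∈ Finset.range (N + 1),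
          D β * Real.exp (-(h * β))
          = C β * Real.exp (-(h * β)) - optC1 N z β * Real.exp (-(h * β)) := by
        intro β _; simp only [hD]; ring
      rw [Finset.sum_congr rfl he, Finset.sum_sub_distrib, hCs, part1, sub_self]
    -- expansion of the double sum
    have step1 : ∑ β ∈ Finset.range (N + 1), ∑ γ ∈ Finset.range (N + 1),
        C β * C γ * G1 (h * β - h * γ)
        = (∑ β ∈ Finset.range (N + 1), ∑ γ ∈ Finset.range (N + 1),
            optC1 N z β * optC1 N z γ * G1 (h * β - h * γ))
          + (∑ β ∈ Finset.range (N + 1), ∑ γ ∈ Finset.range (N + 1),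
            D β * D γ * G1 (h * β - h * γ))
          + (∑ β ∈ Finset.range (N + 1), ∑ γ ∈ Finset.range (N + 1),
            optC1 N z β * D γ * G1 (h * β - h * γ))
          + (∑ β ∈ Finset.range (N + 1), ∑ γ ∈ Finset.range (N + 1),
            D β * optC1 N z γ * G1 (h * β - h * γ)) := by
      rw [← Finset.sum_add_distrib, ← Finset.sum_add_distrib, ← Finset.sum_add_distrib]
      refine Finset.sum_congr rfl fun β _ => ?_
      rw [← Finset.sum_add_distrib, ← Finset.sum_add_distrib, ← Finset.sum_add_distrib]
      refine Finset.sum_congr rfl fun γ _ => ?_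
      simp only [hD]
      ring
    have step2 : ∑ β ∈ Finset.range (N + 1), ∑ γ ∈ Finset.range (N + 1),
        D β * optC1 N z γ * G1 (h * β - h * γ)
        = ∑ β ∈ Finset.range (N + 1), D β * G1 (z - h * β) := by
      refine Finset.sum_congr rfl fun β _ => ?_
      rw [← hrow β, Finset.mul_sum]
      exact Finset.sum_congr rfl fun γ _ => by ring
    have step3 : ∑ β ∈ Finset.range (N + 1), ∑ γ ∈ Finset.range (N + 1),
        optC1 N z β * D γ * G1 (h * β - h * γ)
        = ∑ γ ∈ Finset.range (N + 1), D γ * G1 (z - h * γ) := by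
      rw [Finset.sum_comm]
      refine Finset.sum_congr rfl fun γ _ => ?_
      rw [← hcol γ, Finset.mul_sum]
      exact Finset.sum_congr rfl fun β _ => by ring
    have step4 : ∑ β ∈ Finset.range (N + 1), C β * G1 (z - h * β)
        = (∑ β ∈ Finset.range (N + 1), optC1 N z β * G1 (z - h * β))
          + ∑ β ∈ Finset.range (N + 1), D β * G1 (z - h * β) := by
      rw [← Finset.sum_add_distrib]
      refine Finset.sum_congr rfl fun β _ => ?_
      simp only [hD]
      ring
    -- the remainder kernel sum
    have hsplit : ∀ β ∈ Finset.range (N + 1), ∑ γ ∈ Finset.range (N + 1),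
        D β * D γ * G1 (h * β - h * γ)
        = (∑ γ ∈ Finset.range (N + 1),
            (D β * Real.exp (h * β) / 4) * (D γ * Real.exp (-(h * γ))))
          + (∑ γ ∈ Finset.range (N + 1),
            (D β * Real.exp (-(h * β)) / 4) * (D γ * Real.exp (h * γ)))
          - (∑ γ ∈ Finset.range (N + 1),
            (1/2) * (D β * D γ * Real.exp (-h) ^ (max β γ - min β γ))) := by
      intro β _
      rw [← Finset.sum_add_distrib, ← Finset.sum_sub_distrib]
      refine Finset.sum_congr rfl fun γ _ => ?_
      rw [G1_grid h hp β γ]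
      simp only [Real.exp_sub, Real.exp_neg]
      ring
    have hT2 : ∑ β ∈ Finset.range (N + 1), ∑ γ ∈ Finset.range (N + 1),
        D β * D γ * G1 (h * β - h * γ)
        = -(1/2) * ∑ β ∈ Finset.range (N + 1), ∑ γ ∈ Finset.range (N + 1),
            D β * D γ * Real.exp (-h) ^ (max β γ - min β γ) := by
      rw [Finset.sum_congr rfl hsplit]
      rw [Finset.sum_sub_distrib, Finset.sum_add_distrib]
      have e1 : ∑ β ∈ Finset.range (N + 1), ∑ γ ∈ Finset.range (N + 1),
          (D β * Real.exp (h * β) / 4) * (D γ * Real.exp (-(h * γ))) = 0 := by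
        refine Finset.sum_eq_zero fun β _ => ?_
        rw [← Finset.mul_sum, hD0, mul_zero]
      have e2 : ∑ β ∈ Finset.range (N + 1), ∑ γ ∈ Finset.range (N + 1),
          (D β * Real.exp (-(h * β)) / 4) * (D γ * Real.exp (h * γ)) = 0 := by
        have e2' : ∀ β ∈ Finset.range (N + 1), ∑ γ ∈ Finset.range (N + 1),
            (D β * Real.exp (-(h * β)) / 4) * (D γ * Real.exp (h * γ))
            = (D β * Real.exp (-(h * β))) *
              ((∑ γ ∈ Finset.range (N + 1), D γ * Real.exp (h * γ)) / 4) := by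
          intro β _
          rw [← Finset.mul_sum]
          ring
        rw [Finset.sum_congr rfl e2', ← Finset.sum_mul, hD0, zero_mul]
      have e3 : ∑ β ∈ Finset.range (N + 1), ∑ γ ∈ Finset.range (N + 1),
          (1/2) * (D β * D γ * Real.exp (-h) ^ (max β γ - min β γ))
          = (1/2) * ∑ β ∈ Finset.range (N + 1), ∑ γ ∈ Finset.range (N + 1),
              D β * D γ * Real.exp (-h) ^ (max β γ - min β γ) := by
        rw [Finset.mul_sum]
        exact Finset.sum_congr rfl fun β _ => by rw [Finset.mul_sum]
      rw [e1, e2, e3]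
      ring
    have hpsd : 0 ≤ ∑ β ∈ Finset.range (N + 1), ∑ γ ∈ Finset.range (N + 1),
        D β * D γ * Real.exp (-h) ^ (max β γ - min β γ) := by
      refine kms_psd (Real.exp (-h)) (Real.exp_pos _).le ?_ D N
      rw [← Real.exp_zero]
      exact Real.exp_le_exp.2 (by linarith)
    -- assemble
    simp only [Q1]
    rw [← hh]
    rw [step1, step3, step2, step4, hT2]
    nlinarith [hpsd]
  exact ⟨part1, part2, part3'⟩
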